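/- Let f = (g_2 + g_1 + g_0, h_1 + h_0) : C^2 -> C^2 with g_2 a nonzero square of a linear form, h_1 ≠ 0 dividing g_2 but not dividing g_1. Then f is linearly equivalent to (x,y) |-> (x^2 + y, x); in particular f is a polynomial automorphism of C^2. -/

import Mathlib

/-- An affine automorphism of `ℂ²`. -/
structure Aff where
  m11 : ℂ
  m12 : ℂ
  m21 : ℂ
  m22 : ℂ
  t1 : ℂ
  t2 : ℂ
  inv : m11 * m22 - m12 * m21 ≠ 0

/-- The underlying map of an affine automorphism. -/
def Aff.toFun (A : Aff) (p : ℂ × ℂ) : ℂ × ℂ :=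
  (A.m11 * p.1 + A.m12 * p.2 + A.t1, A.m21 * p.1 + A.m22 * p.2 + A.t2)

lemma aff_bijective (A : Aff) : Function.Bijective A.toFun := by
  rw [Function.bijective_iff_has_inverse]
  have hdet := A.inv
  refine ⟨fun p => ((A.m22 * (p.1 - A.t1) - A.m12 * (p.2 - A.t2)) / (A.m11 * A.m22 - A.m12 * A.m21),
      (A.m11 * (p.2 - A.t2) - A.m21 * (p.1 - A.t1)) / (A.m11 * A.m22 - A.m12 * A.m21)), ?_, ?_⟩ <;>
    intro p <;>
    simp only [Aff.toFun, Prod.ext_iff] <;>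
    constructor
  · linear_combination p.1 * mul_inv_cancel₀ hdet
  · linear_combination p.2 * mul_inv_cancel₀ hdet
  · linear_combination (p.1 - A.t1) * mul_inv_cancel₀ hdet
  · linear_combination (p.2 - A.t2) * mul_inv_cancel₀ hdet

lemma sq_bijective : Function.Bijective (fun p : ℂ × ℂ => (p.1 ^ 2 + p.2, p.1)) := by
  rw [Function.bijective_iff_has_inverse]
  exact ⟨fun p => (p.2, p.1 - p.2 ^ 2), fun p => by simp, fun p => by simp⟩

theorem stmt_15 (a b c p1 p2 g0 d e h0 : ℂ)
    (hg2 : ¬ (a = 0 ∧ b = 0 ∧ c = 0))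
    (hsq : ∃ s t : ℂ, ∀ x y : ℂ, a * x ^ 2 + b * x * y + c * y ^ 2 = (s * x + t * y) ^ 2)
    (hh1 : ¬ (d = 0 ∧ e = 0))
    (hdvd : ∃ s t : ℂ, ∀ x y : ℂ,
        a * x ^ 2 + b * x * y + c * y ^ 2 = (d * x + e * y) * (s * x + t * y))
    (hndvd : ¬ ∃ k : ℂ, ∀ x y : ℂ, p1 * x + p2 * y = k * (d * x + e * y)) :
    (∃ L R : Aff, ∀ q : ℂ × ℂ,
        (a * q.1 ^ 2 + b * q.1 * q.2 + c * q.2 ^ 2 + p1 * q.1 + p2 * q.2 + g0,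
          d * q.1 + e * q.2 + h0)
        = L.toFun (((R.toFun q).1 ^ 2 + (R.toFun q).2, (R.toFun q).1))) ∧
      Function.Bijective (fun q : ℂ × ℂ =>
        (a * q.1 ^ 2 + b * q.1 * q.2 + c * q.2 ^ 2 + p1 * q.1 + p2 * q.2 + g0,
          d * q.1 + e * q.2 + h0)) := by
  obtain ⟨s, t, hst⟩ := hsq
  obtain ⟨s', t', hd⟩ := hdvd
  have ha : a = s ^ 2 := by have := hst 1 0; have := hst 1 0; linear_combination hst 1 0
  have hc : c = t ^ 2 := by linear_combination hst 0 1
  have hb : b = 2 * s * t := by linear_combination hst 1 1 - hst 1 0 - hst 0 1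
  -- s e = t d
  have hkey : s * e - t * d = 0 := by
    have : (s * e - t * d) ^ 2 = 0 := by linear_combination hd e (-d) - hst e (-d)
    exact pow_eq_zero_iff (n := 2) (by norm_num) |>.mp this
  -- μ with s = μ d, t = μ e
  obtain ⟨μ, hs, ht⟩ : ∃ μ : ℂ, s = μ * d ∧ t = μ * e := by
    by_cases hd0 : d = 0
    · subst hd0
      have he0 : e ≠ 0 := fun h => hh1 ⟨rfl, h⟩
      have hs0 : s = 0 := by
        have h' : s * e = 0 := by linear_combination hkey
        exact (mul_eq_zero.mp h').resolve_right he0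
      exact ⟨t / e, by simp [hs0], by field_simp⟩
    · refine ⟨s / d, by field_simp, ?_⟩
      field_simp
      linear_combination -hkey
  have hμ : μ ≠ 0 := by
    intro hμ0
    apply hg2
    refine ⟨?_, ?_, ?_⟩ <;> simp [ha, hc, hb, hs, ht, hμ0]
  have hμ2 : μ ^ 2 ≠ 0 := pow_ne_zero 2 hμ
  have hdet : d * p2 - e * p1 ≠ 0 := by
    intro h0'
    apply hndvd
    by_cases hd0 : d = 0
    · have he0 : e ≠ 0 := fun h => hh1 ⟨hd0, h⟩
      have hp1 : p1 = 0 := by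
        have : e * p1 = 0 := by rw [hd0] at h0'; linear_combination -h0'
        simpa [he0] using this
      exact ⟨p2 / e, fun x y => by rw [hp1, hd0]; field_simp; ring⟩
    · refine ⟨p1 / d, fun x y => ?_⟩
      field_simp
      linear_combination y * h0'
  refine ⟨⟨⟨μ ^ 2, 0, 0, 1, 0, 0, by simpa using hμ2⟩,
      ⟨d, e, p1 / μ ^ 2 - 2 * h0 * d, p2 / μ ^ 2 - 2 * h0 * e, h0, g0 / μ ^ 2 - h0 ^ 2, ?_⟩,
      fun q => ?_⟩, ?_⟩
  · field_simp
    intro h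
    exact hdet (by linear_combination μ ^ 2 * h - (d * p2 - e * p1) * mul_inv_cancel₀ hμ2)
  · simp only [Aff.toFun, Prod.ext_iff]
    constructor
    · field_simp
      rw [ha, hb, hc, hs, ht]
      ring
    · ring
  · have heq : (fun q : ℂ × ℂ =>
        (a * q.1 ^ 2 + b * q.1 * q.2 + c * q.2 ^ 2 + p1 * q.1 + p2 * q.2 + g0,
          d * q.1 + e * q.2 + h0))
        = (Aff.toFun ⟨μ ^ 2, 0, 0, 1, 0, 0, by simpa using hμ2⟩) ∘
          (fun p : ℂ × ℂ => (p.1 ^ 2 + p.2, p.1)) ∘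
          (Aff.toFun ⟨d, e, p1 / μ ^ 2 - 2 * h0 * d, p2 / μ ^ 2 - 2 * h0 * e, h0,
            g0 / μ ^ 2 - h0 ^ 2, by
              field_simp
              intro h
              exact hdet (by linear_combination μ ^ 2 * h - (d * p2 - e * p1) * mul_inv_cancel₀ hμ2)⟩) := by
      funext q
      simp only [Function.comp, Aff.toFun, Prod.ext_iff]
      constructor
      · field_simp
        rw [ha, hb, hc, hs, ht]
        ring
      · ring
    rw [heq]
    exact (aff_bijective _).comp (sq_bijective.comp (aff_bijective _))
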